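/- Let M, N ⊆ ℝⁿ be convex polytopes with nonempty interior, U ⊆ M and V ⊆ N relatively open, and φ : U → V a C¹-map (i.e., continuous with a continuous extension of the differential from the interior). For x ∈ U, let E(x) = span(M(x) − x) and F(y) = span(N(y) − y), where M(x), N(y) denote the smallest faces containing x, y. Then φ'(x)(E(x)) ⊆ F(φ(x)). -/

import Mathlib

open Set

/-- A convex polytope: the convex hull of a finite set. -/
def IsPolytope (n : ℕ) (M : Set (Fin n → ℝ)) : Prop :=
  ∃ S : Finset (Fin n → ℝ), M = convexHull ℝ (S : Set (Fin n → ℝ))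

/-- A face of `M`: a convex extreme subset of `M`. -/
def IsFaceOf (n : ℕ) (M F : Set (Fin n → ℝ)) : Prop :=
  Convex ℝ F ∧ IsExtreme ℝ M F

/-- The smallest face of `M` containing `x`: the intersection of all faces containing `x`. -/
def smallestFace (n : ℕ) (M : Set (Fin n → ℝ)) (x : Fin n → ℝ) : Set (Fin n → ℝ) :=
  ⋂₀ {F | IsFaceOf n M F ∧ x ∈ F}

/-- `E(x) := span_ℝ (M(x) - x)`, where `M(x)` is the smallest face of `M` containing `x`. -/
def spanAt (n : ℕ) (M : Set (Fin n → ℝ)) (x : Fin n → ℝ) : Submodule ℝ (Fin n → ℝ) :=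
  Submodule.span ℝ ((fun y => y - x) '' smallestFace n M x)

/-- dimension of a set: the dimension of its affine hull. -/
noncomputable def setDim (n : ℕ) (F : Set (Fin n → ℝ)) : ℕ :=
  Module.finrank ℝ (vectorSpan ℝ F)

/-- The stratum `∂_i(M)` of points of index `i`, i.e. whose smallest containing face
has dimension `n - i`. -/
def stratum (n : ℕ) (M : Set (Fin n → ℝ)) (i : ℕ) : Set (Fin n → ℝ) :=
  {x ∈ M | setDim n (smallestFace n M x) = n - i}

set_option maxHeartbeats 1000000

set_option linter.unusedSectionVars false

section ConeLemmas

open Set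

variable {E : Type*} [NormedAddCommGroup E] [NormedSpace ℝ E] [FiniteDimensional ℝ E]

def coneInd (T : Finset E) (f : E → E) : Set E :=
  {x | ∃ μ : E → ℝ, (∀ s ∈ T, 0 ≤ μ s) ∧ x = ∑ s ∈ T, μ s • f s}

lemma coneInd_mono {T T' : Finset E} (f : E → E) (h : T ⊆ T') :
    coneInd T f ⊆ coneInd T' f := by
  rintro x ⟨μ, hμ, rfl⟩
  classical
  refine ⟨fun s => if s ∈ T then μ s else 0, fun s _ => ?_, ?_⟩
  · dsimp only
    split_ifs with hs
    · exact hμ s hs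
    · exact le_refl 0
  · rw [← Finset.sum_subset h (f := fun s => (if s ∈ T then μ s else 0) • f s)
      (fun s _ hs => by simp [hs])]
    exact Finset.sum_congr rfl fun s hs => by simp [hs]

lemma isClosed_coneInd (T : Finset E) (f : E → E) : IsClosed (coneInd T f) := by
  classical
  induction T using Finset.strongInduction with
  | _ T ih =>
  by_cases hind : LinearIndependent ℝ (fun s : {x // x ∈ T} => f s)
  · set A : ({x // x ∈ T} → ℝ) →ₗ[ℝ] E :=
      Fintype.linearCombination ℝ (fun s : {x // x ∈ T} => f s) with hA
    have hAapp : ∀ m, A m = ∑ i, m i • f i := fun m => by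
      rw [hA, Fintype.linearCombination_apply]
    have hker : LinearMap.ker A = ⊥ := by
      rw [LinearMap.ker_eq_bot']
      intro m hm
      rw [hAapp] at hm
      exact funext (Fintype.linearIndependent_iff.1 hind m hm)
    have hemb : Topology.IsClosedEmbedding A := LinearMap.isClosedEmbedding_of_injective hker
    have horth : IsClosed {μ : {x // x ∈ T} → ℝ | ∀ i, 0 ≤ μ i} := by
      have : {μ : {x // x ∈ T} → ℝ | ∀ i, 0 ≤ μ i} = ⋂ i, {μ | 0 ≤ μ i} := by
        ext; simp
      rw [this]
      exact isClosed_iInter fun i => isClosed_le continuous_const (continuous_apply i)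
    have himg : coneInd T f = A '' {μ | ∀ i, 0 ≤ μ i} := by
      ext x
      constructor
      · rintro ⟨μ, hμ, rfl⟩
        refine ⟨fun i => μ i, fun i => hμ i i.2, ?_⟩
        rw [hAapp, ← Finset.sum_attach T (fun s => μ s • f s)]
        rfl
      · rintro ⟨ν, hν, rfl⟩
        refine ⟨fun s => if h : s ∈ T then ν ⟨s, h⟩ else 0, fun s hs => by simp [hs, hν ⟨s, hs⟩], ?_⟩
        rw [hAapp, ← Finset.sum_attach T (fun s => (if h : s ∈ T then ν ⟨s, h⟩ else 0) • f s)]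
        exact (Finset.sum_congr rfl fun s _ => by rw [dif_pos s.2]).symm
    rw [himg]
    exact hemb.isClosedMap _ horth
  · obtain ⟨g0, hg0, i₀, hi₀⟩ := Fintype.not_linearIndependent_iff.1 hind
    have key : ∀ (g : {x // x ∈ T} → ℝ), (∑ i, g i • f i.1 = 0) → (∃ i, 0 < g i) →
        coneInd T f ⊆ ⋃ s ∈ T, coneInd (T.erase s) f := by
      rintro g hg ⟨j, hj⟩
      rintro x ⟨μ, hμ, rfl⟩
      set G : E → ℝ := fun s => if h : s ∈ T then g ⟨s, h⟩ else 0 with hG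
      have hGsum : ∑ s ∈ T, G s • f s = 0 := by
        rw [← Finset.sum_attach T (fun s => G s • f s), ← hg]
        exact Finset.sum_congr rfl fun i _ => by simp [hG, i.2]
      set P : Finset {x // x ∈ T} := Finset.univ.filter (fun i => 0 < g i) with hP
      have hPne : P.Nonempty := ⟨j, by simp [hP, hj]⟩
      obtain ⟨i₁, hi₁P, hi₁min⟩ := Finset.exists_min_image P (fun i => μ i.1 / g i) hPne
      have hgi₁ : 0 < g i₁ := by simpa [hP] using hi₁P
      set t : ℝ := μ i₁.1 / g i₁ with ht
      have ht0 : 0 ≤ t := div_nonneg (hμ _ i₁.2) hgi₁.le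
      set μ' : E → ℝ := fun s => μ s - t * G s with hμ'
      have hμ'0 : ∀ s ∈ T, 0 ≤ μ' s := by
        intro s hs
        simp only [hμ', hG, dif_pos hs]
        rcases le_or_gt (g ⟨s, hs⟩) 0 with h | h
        · have : t * g ⟨s, hs⟩ ≤ 0 := mul_nonpos_of_nonneg_of_nonpos ht0 h
          linarith [hμ s hs]
        · have hmin := hi₁min ⟨s, hs⟩ (by simp [hP, h])
          have h2 : t * g ⟨s, hs⟩ ≤ μ s := by
            rw [← le_div_iff₀ h]
            exact hmin
          linarith
      have hμ'i₁ : μ' i₁.1 = 0 := by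
        simp only [hμ', hG, dif_pos i₁.2]
        have he : (⟨i₁.1, i₁.2⟩ : {x // x ∈ T}) = i₁ := Subtype.ext rfl
        rw [he, ht, div_mul_cancel₀ _ hgi₁.ne']
        ring
      have hsum : ∑ s ∈ T, μ s • f s = ∑ s ∈ T, μ' s • f s := by
        simp only [hμ', sub_smul, Finset.sum_sub_distrib]
        have h1 : ∑ s ∈ T, (t * G s) • f s = t • ∑ s ∈ T, G s • f s := by
          rw [Finset.smul_sum]
          exact Finset.sum_congr rfl fun s _ => by rw [smul_smul]
        rw [h1, hGsum, smul_zero, sub_zero]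
      refine Set.mem_biUnion i₁.2 ?_
      refine ⟨μ', fun s hs => hμ'0 s (Finset.mem_of_mem_erase hs), ?_⟩
      rw [hsum, Finset.sum_erase _ (by rw [hμ'i₁, zero_smul])]
    have hcase : (∃ i, 0 < g0 i) ∨ (∃ i, 0 < -g0 i) := by
      rcases lt_trichotomy (g0 i₀) 0 with h | h | h
      · exact Or.inr ⟨i₀, by linarith⟩
      · exact absurd h hi₀
      · exact Or.inl ⟨i₀, h⟩
    have hsub : coneInd T f ⊆ ⋃ s ∈ T, coneInd (T.erase s) f := by
      rcases hcase with h | h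
      · exact key g0 hg0 h
      · refine key (-g0) ?_ h
        simp only [Pi.neg_apply, neg_smul, Finset.sum_neg_distrib, hg0, neg_zero]
    have heq : coneInd T f = ⋃ s ∈ T, coneInd (T.erase s) f :=
      hsub.antisymm (Set.iUnion₂_subset fun s hs => coneInd_mono f (Finset.erase_subset _ _))
    rw [heq]
    exact Set.Finite.isClosed_biUnion T.finite_toSet
      (fun s hs => ih (T.erase s) (Finset.erase_ssubset hs))

end ConeLemmas

lemma mem_smallestFace_self {n : ℕ} {M : Set (Fin n → ℝ)} {x : Fin n → ℝ} :
    x ∈ smallestFace n M x := fun _ hF => hF.2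

lemma smallestFace_isExtreme {n : ℕ} {M : Set (Fin n → ℝ)} {x : Fin n → ℝ}
    (hM : Convex ℝ M) (hx : x ∈ M) : IsExtreme ℝ M (smallestFace n M x) := by
  constructor
  · intro z hz
    exact hz M ⟨⟨hM, IsExtreme.rfl⟩, hx⟩
  · intro x₁ h₁ x₂ h₂ z hz hseg
    intro F hF
    exact hF.1.2.2 h₁ h₂ (hz F hF) hseg

/-- The candidate minimal face: points `z ∈ M` such that `x` lies in a half-open
segment from `z` into `M`. -/
def Fface (n : ℕ) (M : Set (Fin n → ℝ)) (x : Fin n → ℝ) : Set (Fin n → ℝ) :=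
  {z | z ∈ M ∧ ∃ w ∈ M, ∃ t : ℝ, 0 < t ∧ t ≤ 1 ∧ x = t • z + (1 - t) • w}

lemma Fface_convex {n : ℕ} {M : Set (Fin n → ℝ)} {x : Fin n → ℝ} (hM : Convex ℝ M) :
    Convex ℝ (Fface n M x) := by
  rintro z₁ ⟨hz₁, w₁, hw₁, t₁, ht₁0, ht₁1, hx₁⟩ z₂ ⟨hz₂, w₂, hw₂, t₂, ht₂0, ht₂1, hx₂⟩
    a b ha hb hab
  refine ⟨hM hz₁ hz₂ ha hb hab, ?_⟩
  set D : ℝ := a * t₂ + b * t₁ with hD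
  have hD0 : 0 < D := by
    rcases (by rcases lt_or_eq_of_le ha with h|h; exacts [Or.inl h, Or.inr (by linarith)] :
        0 < a ∨ 0 < b) with h | h
    · have : 0 < a * t₂ := mul_pos h ht₂0
      nlinarith [mul_nonneg hb ht₁0.le]
    · have : 0 < b * t₁ := mul_pos h ht₁0
      nlinarith [mul_nonneg ha ht₂0.le]
  set θ : ℝ := a * t₂ / D with hθ
  have hθ0 : 0 ≤ θ := div_nonneg (mul_nonneg ha ht₂0.le) hD0.le
  have hθ1 : θ ≤ 1 := by
    rw [hθ, div_le_one hD0]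
    nlinarith [mul_nonneg hb ht₁0.le]
  set s : ℝ := t₁ * t₂ / D with hs
  have hs0 : 0 < s := div_pos (mul_pos ht₁0 ht₂0) hD0
  have hs1 : s ≤ 1 := by
    rw [hs, div_le_one hD0]
    nlinarith [mul_nonneg ha (by nlinarith : (0:ℝ) ≤ t₂ - t₁ * t₂),
      mul_nonneg hb (by nlinarith : (0:ℝ) ≤ t₁ - t₁ * t₂)]
  have hθt₁ : θ * t₁ = s * a := by rw [hθ, hs]; field_simp
  have hθt₂ : (1 - θ) * t₂ = s * b := by
    have : 1 - θ = b * t₁ / D := by rw [hθ]; field_simp; linarith [hab]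
    rw [this, hs]; field_simp
  -- x = θ • x + (1-θ) • x
  have hxcomb : x = (s * a) • z₁ + (s * b) • z₂ +
      ((θ * (1 - t₁)) • w₁ + ((1 - θ) * (1 - t₂)) • w₂) := by
    have := congrArg (fun u => θ • u) hx₁
    have := congrArg (fun u => (1 - θ) • u) hx₂
    rw [← hθt₁, ← hθt₂]
    calc x = θ • x + (1 - θ) • x := by module
    _ = θ • (t₁ • z₁ + (1 - t₁) • w₁) + (1 - θ) • (t₂ • z₂ + (1 - t₂) • w₂) := by
        rw [← hx₁, ← hx₂]
    _ = (θ * t₁) • z₁ + ((1 - θ) * t₂) • z₂ +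
        ((θ * (1 - t₁)) • w₁ + ((1 - θ) * (1 - t₂)) • w₂) := by module
  have hcoef : θ * (1 - t₁) + (1 - θ) * (1 - t₂) = 1 - s := by
    have h1 : θ * t₁ + (1 - θ) * t₂ = s * (a + b) := by rw [hθt₁, hθt₂]; ring
    rw [hab] at h1; nlinarith [h1]
  rcases eq_or_lt_of_le hs1 with hseq | hslt
  · -- s = 1 : then the w-part vanishes and x = a•z₁+b•z₂
    have hc1 : θ * (1 - t₁) = 0 ∧ (1 - θ) * (1 - t₂) = 0 := by
      constructor <;> nlinarith [mul_nonneg hθ0 (by linarith : (0:ℝ) ≤ 1 - t₁),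
        mul_nonneg (by linarith : (0:ℝ) ≤ 1 - θ) (by linarith : (0:ℝ) ≤ 1 - t₂)]
    refine ⟨a • z₁ + b • z₂, hM hz₁ hz₂ ha hb hab, 1, one_pos, le_refl 1, ?_⟩
    rw [hxcomb, hc1.1, hc1.2, ← hseq]
    module
  · -- s < 1
    set w : Fin n → ℝ := (1 - s)⁻¹ • ((θ * (1 - t₁)) • w₁ + ((1 - θ) * (1 - t₂)) • w₂) with hw
    have h1s : (0:ℝ) < 1 - s := by linarith
    have hwM : w ∈ M := by
      rw [hw, smul_add, smul_smul, smul_smul]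
      refine hM hw₁ hw₂ ?_ ?_ ?_
      · exact mul_nonneg (inv_nonneg.2 h1s.le) (mul_nonneg hθ0 (by linarith))
      · exact mul_nonneg (inv_nonneg.2 h1s.le) (mul_nonneg (by linarith) (by linarith))
      · rw [← mul_add, hcoef, inv_mul_cancel₀ h1s.ne']
    refine ⟨w, hwM, s, hs0, hs1, ?_⟩
    rw [hxcomb, hw, smul_smul, mul_inv_cancel₀ h1s.ne', one_smul]
    module

lemma Fface_extreme {n : ℕ} {M : Set (Fin n → ℝ)} {x : Fin n → ℝ} (hM : Convex ℝ M) :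
    IsExtreme ℝ M (Fface n M x) := by
  refine ⟨fun z hz => hz.1, ?_⟩
  rintro x₁ hx₁ x₂ hx₂ z ⟨hzM, w, hwM, t, ht0, ht1, hxe⟩ hseg
  rw [openSegment_eq_image] at hseg
  obtain ⟨a, ⟨ha0, ha1⟩, hza⟩ := hseg
  -- z = (1-a) • x₁ + a • x₂  with 0 < a < 1
  have key : ∀ (u₁ u₂ : Fin n → ℝ) (c : ℝ), u₁ ∈ M → u₂ ∈ M → 0 < c → c < 1 →
      z = c • u₁ + (1 - c) • u₂ → u₁ ∈ Fface n M x := by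
    intro u₁ u₂ c hu₁ hu₂ hc0 hc1 hzc
    have htc1 : t * c < 1 := by nlinarith
    have htc0 : 0 < t * c := mul_pos ht0 hc0
    set u : Fin n → ℝ := (1 - t * c)⁻¹ • ((t * (1 - c)) • u₂ + (1 - t) • w) with hu
    have h1tc : (0:ℝ) < 1 - t * c := by linarith
    have huM : u ∈ M := by
      rw [hu, smul_add, smul_smul, smul_smul]
      refine hM hu₂ hwM ?_ ?_ ?_
      · exact mul_nonneg (inv_nonneg.2 h1tc.le) (mul_nonneg ht0.le (by linarith))
      · exact mul_nonneg (inv_nonneg.2 h1tc.le) (by linarith)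
      · rw [← mul_add]
        rw [inv_mul_eq_one₀ h1tc.ne']
        ring
    refine ⟨hu₁, u, huM, t * c, htc0, htc1.le, ?_⟩
    rw [hu, smul_smul, mul_inv_cancel₀ h1tc.ne', one_smul]
    calc x = t • z + (1 - t) • w := hxe
    _ = t • (c • u₁ + (1 - c) • u₂) + (1 - t) • w := by rw [← hzc]
    _ = (t * c) • u₁ + ((t * (1 - c)) • u₂ + (1 - t) • w) := by module
  exact key x₁ x₂ (1 - a) hx₁ hx₂ (by linarith) (by linarith) (by rw [← hza]; module)

lemma smallestFace_subset_Fface {n : ℕ} {M : Set (Fin n → ℝ)} {x : Fin n → ℝ}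
    (hM : Convex ℝ M) (hx : x ∈ M) : smallestFace n M x ⊆ Fface n M x :=
  sInter_subset_of_mem ⟨⟨Fface_convex hM, Fface_extreme hM⟩,
    ⟨hx, x, hx, 1, one_pos, le_refl 1, by module⟩⟩

lemma spanAt_two_sided {n : ℕ} {M : Set (Fin n → ℝ)} {x v : Fin n → ℝ}
    (hM : Convex ℝ M) (hx : x ∈ M) (hv : v ∈ spanAt n M x) :
    ∃ ε : ℝ, 0 < ε ∧ ∀ t : ℝ, |t| ≤ ε → x + t • v ∈ M := by
  set D : Submodule ℝ (Fin n → ℝ) :=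
    { carrier := {u | ∃ ε : ℝ, 0 < ε ∧ ∀ t : ℝ, |t| ≤ ε → x + t • u ∈ M}
      zero_mem' := ⟨1, one_pos, fun t _ => by simpa using hx⟩
      add_mem' := by
        rintro u₁ u₂ ⟨ε₁, hε₁, h₁⟩ ⟨ε₂, hε₂, h₂⟩
        refine ⟨min ε₁ ε₂ / 2, by positivity, fun t ht => ?_⟩
        have e1 : |2 * t| ≤ ε₁ := by
          rw [abs_mul, abs_two]
          calc 2 * |t| ≤ 2 * (min ε₁ ε₂ / 2) := by
                have := abs_nonneg t; linarith [ht]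
          _ = min ε₁ ε₂ := by ring
          _ ≤ ε₁ := min_le_left _ _
        have e2 : |2 * t| ≤ ε₂ := by
          rw [abs_mul, abs_two]
          calc 2 * |t| ≤ 2 * (min ε₁ ε₂ / 2) := by
                have := abs_nonneg t; linarith [ht]
          _ = min ε₁ ε₂ := by ring
          _ ≤ ε₂ := min_le_right _ _
        have := hM (h₁ _ e1) (h₂ _ e2) (by norm_num : (0:ℝ) ≤ 1/2)
          (by norm_num : (0:ℝ) ≤ 1/2) (by norm_num)
        convert this using 1
        module
      smul_mem' := by
        rintro c u ⟨ε, hε, h⟩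
        rcases eq_or_ne c 0 with rfl | hc
        · exact ⟨1, one_pos, fun t _ => by simpa using hx⟩
        · refine ⟨ε / |c|, by positivity, fun t ht => ?_⟩
          have : |t * c| ≤ ε := by
            rw [abs_mul]
            rw [div_eq_inv_mul] at ht
            calc |t| * |c| ≤ |c|⁻¹ * ε * |c| := by
                  apply mul_le_mul_of_nonneg_right ht (abs_nonneg c)
            _ = ε := by field_simp
          have := h _ this
          simpa [smul_smul] using this } with hD
  suffices hsub : spanAt n M x ≤ D by exact hsub hv
  rw [spanAt, Submodule.span_le]
  rintro _ ⟨y, hy, rfl⟩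
  obtain ⟨hyM, w, hwM, t, ht0, ht1, hxe⟩ := smallestFace_subset_Fface hM hx hy
  show y - x ∈ (D : Set (Fin n → ℝ))
  rcases eq_or_lt_of_le ht1 with rfl | htlt
  · -- t = 1 : x = y, direction is 0
    have hxy : x = y := by rw [hxe]; module
    have : y - x = 0 := by rw [hxy]; abel
    rw [this]
    exact Submodule.zero_mem D
  · refine ⟨min 1 (t / (1 - t)), lt_min one_pos (div_pos ht0 (by linarith)), fun s hs => ?_⟩
    rcases le_or_gt 0 s with hs0 | hs0
    · -- nonnegative side: convex combination of x and y
      have hs1 : s ≤ 1 := le_trans (le_trans (le_abs_self s) hs) (min_le_left _ _)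
      have : x + s • (y - x) = (1 - s) • x + s • y := by module
      rw [this]
      exact hM hx hyM (by linarith) hs0 (by ring)
    · -- negative side: combination of x and w
      have h1t : (0:ℝ) < 1 - t := by linarith
      set r : ℝ := -s with hr
      have hr0 : 0 < r := by simp [hr]; linarith
      have hrle : r ≤ t / (1 - t) := by
        have : |s| = r := by rw [abs_of_neg hs0]
        rw [← this]; exact le_trans hs (min_le_right _ _)
      set c : ℝ := r * (1 - t) / t with hc
      have hc0 : 0 ≤ c := by positivity
      have hc1 : c ≤ 1 := by
        rw [hc, div_le_one ht0]
        calc r * (1 - t) ≤ (t / (1 - t)) * (1 - t) := by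
              apply mul_le_mul_of_nonneg_right hrle h1t.le
        _ = t := by field_simp
      have hgoal : x + s • (y - x) = (1 - c) • x + c • w := by
        have hrs : s = -r := by rw [hr]; ring
        rw [hrs]
        have hct : c * t = r * (1 - t) := by rw [hc]; field_simp
        -- use hxe : x = t • y + (1 - t) • w
        have expand : (1 - c) • x + c • w - (x + (-r) • (y - x)) =
            (c / (1 - t)) • ((t • y + (1 - t) • w) - x) := by
          match_scalars <;> field_simp <;> nlinarith [hct]
        have : (1 - c) • x + c • w - (x + (-r) • (y - x)) = 0 := by
          rw [expand, ← hxe]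
          simp
        linear_combination (norm := module) -this
      rw [hgoal]
      exact hM hx hwM (by linarith) hc0 (by ring)


lemma key_approx {n : ℕ} {M O : Set (Fin n → ℝ)} (hM : Convex ℝ M) (hO : IsOpen O)
    {p : Fin n → ℝ} (hp : p ∈ interior M)
    {φ : (Fin n → ℝ) → (Fin n → ℝ)} {φ' : (Fin n → ℝ) → ((Fin n → ℝ) →L[ℝ] (Fin n → ℝ))}
    (hcont : ContinuousOn φ (M ∩ O)) (hcont' : ContinuousOn φ' (M ∩ O))
    (hderiv : ∀ z ∈ interior (M ∩ O), HasFDerivAt φ (φ' z) z)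
    {x v : Fin n → ℝ} (hx : x ∈ M ∩ O) {ε : ℝ} (hε : 0 < ε)
    (hseg : ∀ s : ℝ, 0 ≤ s → s ≤ ε → x + s • v ∈ M ∩ O)
    {δ : ℝ} (hδ : 0 < δ) :
    ∃ t : ℝ, 0 < t ∧ t ≤ ε ∧ ‖φ (x + t • v) - φ x - t • (φ' x v)‖ ≤ δ * t := by
  have hUint : interior (M ∩ O) = interior M ∩ O := by
    rw [interior_inter, hO.interior_eq]
  set U : Set (Fin n → ℝ) := M ∩ O with hU
  -- continuity of φ' at x within U, with tolerance δ' := δ / (4 * (‖v‖ + 1))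
  set δ' : ℝ := δ / (4 * (‖v‖ + 1)) with hδ'
  have hδ'0 : 0 < δ' := by positivity
  obtain ⟨r, hr0, hr⟩ := Metric.continuousWithinAt_iff.1 (hcont' x hx) δ' hδ'0
  -- choice of t
  obtain ⟨t, ht0, htε, htv⟩ : ∃ t : ℝ, 0 < t ∧ t ≤ ε ∧ t * ‖v‖ ≤ r / 4 := by
    refine ⟨min ε (r / (4 * (‖v‖ + 1))), lt_min hε (by positivity), min_le_left _ _, ?_⟩
    have h1 : min ε (r / (4 * (‖v‖ + 1))) ≤ r / (4 * (‖v‖ + 1)) := min_le_right _ _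
    calc min ε (r / (4 * (‖v‖ + 1))) * ‖v‖ ≤ (r / (4 * (‖v‖ + 1))) * (‖v‖ + 1) := by
          apply mul_le_mul h1 (by linarith [norm_nonneg v]) (norm_nonneg v) (by positivity)
    _ = r / 4 := by field_simp
  refine ⟨t, ht0, htε, ?_⟩
  -- the compact segment and its thickening inside O
  have hsegU : ∀ s : ℝ, s ∈ Icc (0:ℝ) t → x + s • v ∈ U := fun s hs =>
    hseg s hs.1 (le_trans hs.2 htε)
  set seg : Set (Fin n → ℝ) := (fun s : ℝ => x + s • v) '' Icc 0 t with hsegdef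
  have hsegcompact : IsCompact seg :=
    isCompact_Icc.image (by continuity)
  have hsegO : seg ⊆ O := by
    rintro _ ⟨s, hs, rfl⟩
    exact (hsegU s hs).2
  obtain ⟨ρ, hρ0, hρ⟩ := hsegcompact.exists_thickening_subset_open hO hsegO
  -- continuity of φ at x and at x + t • v within U
  obtain ⟨r₂, hr₂0, hr₂⟩ := Metric.continuousWithinAt_iff.1 (hcont x hx) (δ * t / 4)
    (by positivity)
  have hxt : x + t • v ∈ U := hseg t ht0.le htε
  obtain ⟨r₃, hr₃0, hr₃⟩ := Metric.continuousWithinAt_iff.1 (hcont _ hxt) (δ * t / 4)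
    (by positivity)
  -- the shift amount λ
  obtain ⟨C, hC1, hC0, hCbound⟩ : ∃ C : ℝ, 1 ≤ C ∧ 0 < C ∧
      ∀ s : ℝ, s ∈ Icc (0:ℝ) t → ‖p - (x + s • v)‖ ≤ C := by
    refine ⟨‖p - x‖ + t * ‖v‖ + 1, ?_, ?_, ?_⟩
    · have h1 := norm_nonneg (p - x)
      have h2 : 0 ≤ t * ‖v‖ := mul_nonneg ht0.le (norm_nonneg v)
      linarith
    · have h1 := norm_nonneg (p - x)
      have h2 : 0 ≤ t * ‖v‖ := mul_nonneg ht0.le (norm_nonneg v)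
      linarith
    intro s hs
    have : p - (x + s • v) = (p - x) - s • v := by abel
    rw [this]
    calc ‖(p - x) - s • v‖ ≤ ‖p - x‖ + ‖s • v‖ := norm_sub_le _ _
    _ ≤ ‖p - x‖ + t * ‖v‖ := by
        rw [norm_smul, Real.norm_eq_abs, abs_of_nonneg hs.1]
        have := mul_le_mul_of_nonneg_right hs.2 (norm_nonneg v)
        linarith
    _ ≤ ‖p - x‖ + t * ‖v‖ + 1 := by linarith
  obtain ⟨m, hm0, hmρ, hmr, hmr₂, hmr₃, hmφ⟩ : ∃ m : ℝ, 0 < m ∧ m ≤ ρ ∧ m ≤ r / 4 ∧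
      m ≤ r₂ ∧ m ≤ r₃ ∧ m ≤ δ / (2 * (‖(φ' x) v‖ + 1)) := by
    refine ⟨min ρ (min (r / 4) (min r₂ (min r₃ (δ / (2 * (‖(φ' x) v‖ + 1)))))),
      lt_min hρ0 (lt_min (by positivity) (lt_min hr₂0 (lt_min hr₃0 (by positivity)))),
      min_le_left _ _, ?_, ?_, ?_, ?_⟩
    · exact le_trans (min_le_right _ _) (min_le_left _ _)
    · exact le_trans (min_le_right _ _) (le_trans (min_le_right _ _) (min_le_left _ _))
    · exact le_trans (min_le_right _ _) (le_trans (min_le_right _ _)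
        (le_trans (min_le_right _ _) (min_le_left _ _)))
    · exact le_trans (min_le_right _ _) (le_trans (min_le_right _ _)
        (le_trans (min_le_right _ _) (min_le_right _ _)))
  obtain ⟨lam, hlam0, hlam1, hlamC, hlam_m⟩ : ∃ lam : ℝ, 0 < lam ∧ lam < 1 ∧
      lam * C ≤ m / 2 ∧ lam ≤ m / 2 := by
    refine ⟨min (1/2) (m / (2 * C)), lt_min (by norm_num) (by positivity),
      lt_of_le_of_lt (min_le_left _ _) (by norm_num), ?_, ?_⟩
    · have h1 : min (1/2 : ℝ) (m / (2 * C)) ≤ m / (2 * C) := min_le_right _ _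
      calc min (1/2 : ℝ) (m / (2 * C)) * C ≤ (m / (2 * C)) * C :=
        mul_le_mul_of_nonneg_right h1 hC0.le
      _ = m / 2 := by field_simp
    · have h1 : min (1/2 : ℝ) (m / (2 * C)) ≤ m / (2 * C) := min_le_right _ _
      have h2 : m / (2 * C) ≤ m / 2 := by
        apply div_le_div_of_nonneg_left hm0.le (by norm_num)
        linarith
      linarith
  -- the shifted points
  set z : ℝ → (Fin n → ℝ) := fun s => (x + s • v) + lam • (p - (x + s • v)) with hz
  have hzint : ∀ s : ℝ, s ∈ Icc (0:ℝ) t → z s ∈ interior M ∩ O := by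
    intro s hs
    constructor
    · have hcombo : z s = lam • p + (1 - lam) • (x + s • v) := by simp only [hz]; module
      rw [hcombo]
      exact hM.combo_interior_self_mem_interior hp (hsegU s hs).1 hlam0
        (by linarith) (by ring)
    · apply hρ
      rw [Metric.mem_thickening_iff]
      refine ⟨x + s • v, ⟨s, hs, rfl⟩, ?_⟩
      rw [dist_eq_norm]
      have : z s - (x + s • v) = lam • (p - (x + s • v)) := by simp only [hz]; abel
      rw [this, norm_smul, Real.norm_eq_abs, abs_of_nonneg hlam0.le]
      calc lam * ‖p - (x + s • v)‖ ≤ lam * C :=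
        mul_le_mul_of_nonneg_left (hCbound s hs) hlam0.le
      _ ≤ m / 2 := hlamC
      _ < m := by linarith
      _ ≤ ρ := hmρ
  have hzU : ∀ s : ℝ, s ∈ Icc (0:ℝ) t → z s ∈ U := fun s hs =>
    ⟨interior_subset (hzint s hs).1, (hzint s hs).2⟩
  have hzx : ∀ s : ℝ, s ∈ Icc (0:ℝ) t → ‖z s - x‖ < r := by
    intro s hs
    have h1 : z s - x = s • v + lam • (p - (x + s • v)) := by simp only [hz]; abel
    rw [h1]
    calc ‖s • v + lam • (p - (x + s • v))‖ ≤ ‖s • v‖ + ‖lam • (p - (x + s • v))‖ :=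
      norm_add_le _ _
    _ ≤ t * ‖v‖ + lam * C := by
        apply add_le_add
        · rw [norm_smul, Real.norm_eq_abs, abs_of_nonneg hs.1]
          exact mul_le_mul_of_nonneg_right hs.2 (norm_nonneg v)
        · rw [norm_smul, Real.norm_eq_abs, abs_of_nonneg hlam0.le]
          exact mul_le_mul_of_nonneg_left (hCbound s hs) hlam0.le
    _ ≤ r / 4 + m / 2 := add_le_add htv hlamC
    _ ≤ r / 4 + (r / 4) / 2 := by linarith
    _ < r := by linarith
  -- endpoints
  set a : Fin n → ℝ := z 0 with ha
  set b : Fin n → ℝ := z t with hb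
  have hmem0 : (0:ℝ) ∈ Icc (0:ℝ) t := ⟨le_refl 0, ht0.le⟩
  have hmemt : t ∈ Icc (0:ℝ) t := ⟨ht0.le, le_refl t⟩
  have hab : b - a = ((1 - lam) * t) • v := by simp only [ha, hb, hz]; module
  -- the segment from a to b consists of the points z s
  have hsegab : ∀ y ∈ segment ℝ a b, ∃ s ∈ Icc (0:ℝ) t, y = z s := by
    intro y hy
    rw [segment_eq_image] at hy
    obtain ⟨θ, hθ, hyθ⟩ := hy
    refine ⟨θ * t, ⟨mul_nonneg hθ.1 ht0.le, ?_⟩, ?_⟩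
    · calc θ * t ≤ 1 * t := mul_le_mul_of_nonneg_right hθ.2 ht0.le
      _ = t := one_mul t
    · rw [← hyθ]
      simp only [ha, hb, hz]
      module
  -- mean value inequality on the segment
  have hMVT : ‖φ b - φ a - (φ' x) (b - a)‖ ≤ δ' * ‖b - a‖ := by
    apply Convex.norm_image_sub_le_of_norm_hasFDerivWithin_le'
      (f := φ) (f' := φ') (φ := φ' x) (s := segment ℝ a b)
    · intro y hy
      obtain ⟨s, hs, rfl⟩ := hsegab y hy
      have : z s ∈ interior U := by rw [hUint]; exact hzint s hs
      exact (hderiv _ this).hasFDerivWithinAt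
    · intro y hy
      obtain ⟨s, hs, rfl⟩ := hsegab y hy
      have := hr (hzU s hs) (by rw [dist_eq_norm]; exact hzx s hs)
      rw [dist_eq_norm] at this
      exact this.le
    · exact convex_segment a b
    · exact left_mem_segment ℝ a b
    · exact right_mem_segment ℝ a b
  -- φ a is close to φ x, φ b is close to φ (x + t • v)
  have hax : ‖φ a - φ x‖ ≤ δ * t / 4 := by
    have hdist : dist a x < r₂ := by
      rw [dist_eq_norm, ha]
      have h1 : z 0 - x = lam • (p - x) := by simp only [hz]; module
      rw [h1, norm_smul, Real.norm_eq_abs, abs_of_nonneg hlam0.le]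
      have h2 : ‖p - x‖ ≤ C := by
        have := hCbound 0 hmem0
        simpa using this
      calc lam * ‖p - x‖ ≤ lam * C := mul_le_mul_of_nonneg_left h2 hlam0.le
      _ ≤ m / 2 := hlamC
      _ < m := by linarith
      _ ≤ r₂ := hmr₂
    have := hr₂ (hzU 0 hmem0) hdist
    rw [dist_eq_norm] at this
    exact this.le
  have hbx : ‖φ b - φ (x + t • v)‖ ≤ δ * t / 4 := by
    have hdist : dist b (x + t • v) < r₃ := by
      rw [dist_eq_norm, hb]
      have h1 : z t - (x + t • v) = lam • (p - (x + t • v)) := by simp only [hz]; abel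
      rw [h1, norm_smul, Real.norm_eq_abs, abs_of_nonneg hlam0.le]
      calc lam * ‖p - (x + t • v)‖ ≤ lam * C :=
        mul_le_mul_of_nonneg_left (hCbound t hmemt) hlam0.le
      _ ≤ m / 2 := hlamC
      _ < m := by linarith
      _ ≤ r₃ := hmr₃
    have := hr₃ (hzU t hmemt) hdist
    rw [dist_eq_norm] at this
    exact this.le
  -- the derivative term
  have hd4 : ‖(φ' x) (b - a) - t • (φ' x v)‖ ≤ δ * t / 4 := by
    rw [hab, ContinuousLinearMap.map_smul]
    have h1 : ((1 - lam) * t) • (φ' x) v - t • (φ' x) v = (-(lam * t)) • (φ' x) v := by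
      module
    rw [h1, norm_smul, Real.norm_eq_abs, abs_neg, abs_of_nonneg (mul_nonneg hlam0.le ht0.le)]
    have hlamδ : lam ≤ δ / (4 * (‖(φ' x) v‖ + 1)) := by
      calc lam ≤ m / 2 := hlam_m
      _ ≤ (δ / (2 * (‖(φ' x) v‖ + 1))) / 2 := by linarith [hmφ]
      _ = δ / (4 * (‖(φ' x) v‖ + 1)) := by
          rw [div_div]; ring_nf
    calc lam * t * ‖(φ' x) v‖ ≤ (δ / (4 * (‖(φ' x) v‖ + 1))) * t * ‖(φ' x) v‖ := by
          apply mul_le_mul_of_nonneg_right _ (norm_nonneg _)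
          exact mul_le_mul_of_nonneg_right hlamδ ht0.le
    _ ≤ δ * t / 4 := by
          rw [div_mul_eq_mul_div, div_mul_eq_mul_div, div_le_div_iff₀ (by positivity) (by norm_num)]
          nlinarith [norm_nonneg ((φ' x) v), hδ.le, ht0.le]
  -- the MVT term
  have hd2 : ‖φ b - φ a - (φ' x) (b - a)‖ ≤ δ * t / 4 := by
    refine le_trans hMVT ?_
    rw [hab, norm_smul, Real.norm_eq_abs,
      abs_of_nonneg (mul_nonneg (by linarith : (0:ℝ) ≤ 1 - lam) ht0.le)]
    rw [hδ']
    calc δ / (4 * (‖v‖ + 1)) * ((1 - lam) * t * ‖v‖) ≤ δ / (4 * (‖v‖ + 1)) * (t * (‖v‖ + 1)) := by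
          apply mul_le_mul_of_nonneg_left _ (by positivity)
          nlinarith [norm_nonneg v, ht0.le, mul_nonneg (mul_nonneg hlam0.le ht0.le) (norm_nonneg v)]
    _ = δ * t / 4 := by field_simp
  -- final assembly
  have hsplit : φ (x + t • v) - φ x - t • (φ' x v) =
      (φ (x + t • v) - φ b) + (φ b - φ a - (φ' x) (b - a)) + (φ a - φ x) +
      ((φ' x) (b - a) - t • (φ' x v)) := by abel
  rw [hsplit]
  calc ‖(φ (x + t • v) - φ b) + (φ b - φ a - (φ' x) (b - a)) + (φ a - φ x) +
      ((φ' x) (b - a) - t • (φ' x v))‖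
      ≤ ‖(φ (x + t • v) - φ b) + (φ b - φ a - (φ' x) (b - a)) + (φ a - φ x)‖ +
        ‖(φ' x) (b - a) - t • (φ' x v)‖ := norm_add_le _ _
    _ ≤ ‖(φ (x + t • v) - φ b) + (φ b - φ a - (φ' x) (b - a))‖ + ‖φ a - φ x‖ +
        ‖(φ' x) (b - a) - t • (φ' x v)‖ := by
          have := norm_add_le ((φ (x + t • v) - φ b) + (φ b - φ a - (φ' x) (b - a))) (φ a - φ x)
          linarith
    _ ≤ ‖φ (x + t • v) - φ b‖ + ‖φ b - φ a - (φ' x) (b - a)‖ + ‖φ a - φ x‖ +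
        ‖(φ' x) (b - a) - t • (φ' x v)‖ := by
          have := norm_add_le (φ (x + t • v) - φ b) (φ b - φ a - (φ' x) (b - a))
          linarith
    _ ≤ δ * t / 4 + δ * t / 4 + δ * t / 4 + δ * t / 4 := by
          have h1 : ‖φ (x + t • v) - φ b‖ = ‖φ b - φ (x + t • v)‖ := norm_sub_rev _ _
          rw [h1]
          exact add_le_add (add_le_add (add_le_add hbx hd2) hax) hd4
    _ = δ * t := by ring


/-- Let `M, N ⊆ ℝⁿ` be convex polytopes with nonempty interior,
`U ⊆ M`, `V ⊆ N` relatively open, and `φ : U → V` a `C¹`-map (continuous, with a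
derivative on the interior extending continuously to `U`).  Then
`φ'(x)(E(x)) ⊆ F(φ(x))` for all `x ∈ U`. -/
theorem derivative_maps_face_span_into_face_span {n : ℕ}
    (M N U V : Set (Fin n → ℝ))
    (hM : IsPolytope n M) (hMi : (interior M).Nonempty)
    (hN : IsPolytope n N) (hNi : (interior N).Nonempty)
    (hU : ∃ O : Set (Fin n → ℝ), IsOpen O ∧ U = M ∩ O)
    (hV : ∃ O : Set (Fin n → ℝ), IsOpen O ∧ V = N ∩ O)
    (φ : (Fin n → ℝ) → (Fin n → ℝ)) (φ' : (Fin n → ℝ) → ((Fin n → ℝ) →L[ℝ] (Fin n → ℝ)))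
    (hmaps : Set.MapsTo φ U V) (hcont : ContinuousOn φ U)
    (hcont' : ContinuousOn φ' U)
    (hderiv : ∀ x ∈ interior U, HasFDerivAt φ (φ' x) x) :
    ∀ x ∈ U, ∀ v ∈ spanAt n M x, φ' x v ∈ spanAt n N (φ x) := by
  obtain ⟨O, hOopen, rfl⟩ := hU
  obtain ⟨O', hO'open, rfl⟩ := hV
  intro x hx v hv
  have hMconv : Convex ℝ M := by
    obtain ⟨SM, rfl⟩ := hM
    exact convex_convexHull ℝ _
  obtain ⟨SN, rfl⟩ := hN
  set N : Set (Fin n → ℝ) := convexHull ℝ (SN : Set (Fin n → ℝ)) with hNdef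
  have hNconv : Convex ℝ N := convex_convexHull ℝ _
  have hxM : x ∈ M := hx.1
  have hxO : x ∈ O := hx.2
  have hyN : φ x ∈ N := (hmaps hx).1
  obtain ⟨p, hp⟩ := hMi
  -- two-sided feasibility of `v` at `x` inside `M`
  obtain ⟨ε₀, hε₀, hseg₀⟩ := spanAt_two_sided hMconv hxM hv
  -- shrink so as to stay inside `O` as well
  obtain ⟨ε₁, hε₁0, hε₁ε₀, hO₁⟩ : ∃ ε₁ : ℝ, 0 < ε₁ ∧ ε₁ ≤ ε₀ ∧
      ∀ t : ℝ, |t| ≤ ε₁ → x + t • v ∈ O := by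
    have hcont2 : Continuous (fun t : ℝ => x + t • v) := by continuity
    have hOpre : IsOpen ((fun t : ℝ => x + t • v) ⁻¹' O) := hOopen.preimage hcont2
    have h0 : (0:ℝ) ∈ (fun t : ℝ => x + t • v) ⁻¹' O := by
      simp only [Set.mem_preimage, zero_smul, add_zero]
      exact hxO
    obtain ⟨ε', hε', hball⟩ := Metric.isOpen_iff.1 hOpre 0 h0
    refine ⟨min ε₀ (ε'/2), lt_min hε₀ (by linarith), min_le_left _ _, fun t ht => ?_⟩
    refine hball ?_
    rw [Metric.mem_ball, Real.dist_eq, sub_zero]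
    have h2 := le_trans ht (min_le_right _ _)
    linarith
  have hsegU : ∀ s : ℝ, 0 ≤ s → s ≤ ε₁ → x + s • v ∈ M ∩ O := fun s h0 h1 =>
    ⟨hseg₀ s (by rw [abs_of_nonneg h0]; linarith), hO₁ s (by rw [abs_of_nonneg h0]; linarith)⟩
  have hsegU' : ∀ s : ℝ, 0 ≤ s → s ≤ ε₁ → x + s • (-v) ∈ M ∩ O := by
    intro s h0 h1
    have h : x + s • (-v) = x + (-s) • v := by module
    rw [h]
    have habs : |(-s)| ≤ ε₁ := by rw [abs_neg, abs_of_nonneg h0]; linarith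
    exact ⟨hseg₀ (-s) (le_trans habs hε₁ε₀), hO₁ (-s) habs⟩
  -- the cone of directions from `φ x` into `N`
  set K : Set (Fin n → ℝ) := {w | ∃ c : ℝ, 0 ≤ c ∧ ∃ z ∈ N, w = c • (z - φ x)} with hK
  have hKcone : K = coneInd SN (fun s => s - φ x) := by
    ext w
    constructor
    · rintro ⟨c, hc, z, hzN, rfl⟩
      rw [hNdef, Finset.mem_convexHull'] at hzN
      obtain ⟨lw, hlw0, hlw1, hlwz⟩ := hzN
      refine ⟨fun s => c * lw s, fun s hs => mul_nonneg hc (hlw0 s hs), ?_⟩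
      have h1 : ∀ s ∈ SN, (c * lw s) • (s - φ x) = c • (lw s • s - lw s • φ x) := by
        intro s _
        module
      rw [Finset.sum_congr rfl h1, ← Finset.smul_sum, Finset.sum_sub_distrib,
        ← Finset.sum_smul, hlw1, hlwz, one_smul]
    · rintro ⟨μ, hμ, rfl⟩
      have hc0 : 0 ≤ ∑ s ∈ SN, μ s := Finset.sum_nonneg hμ
      rcases eq_or_lt_of_le hc0 with hc | hc
      · refine ⟨0, le_refl 0, φ x, hyN, ?_⟩
        rw [zero_smul]
        refine Finset.sum_eq_zero ?_
        intro s hs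
        have hz := (Finset.sum_eq_zero_iff_of_nonneg hμ).1 hc.symm s hs
        simp [hz]
      · set c : ℝ := ∑ s ∈ SN, μ s with hcdef
        refine ⟨c, hc.le, ∑ s ∈ SN, (μ s / c) • s, ?_, ?_⟩
        · rw [hNdef, Finset.mem_convexHull']
          refine ⟨fun s => μ s / c, fun s hs => div_nonneg (hμ s hs) hc.le, ?_, rfl⟩
          rw [← Finset.sum_div, ← hcdef, div_self hc.ne']
        · rw [smul_sub, Finset.smul_sum]
          have h1 : ∀ s ∈ SN, c • (μ s / c) • s = μ s • s := by
            intro s _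
            rw [smul_smul, mul_div_cancel₀ _ hc.ne']
          rw [Finset.sum_congr rfl h1]
          have h2 : ∀ s ∈ SN, μ s • (s - φ x) = μ s • s - μ s • φ x := fun s _ => smul_sub _ _ _
          rw [Finset.sum_congr rfl h2, Finset.sum_sub_distrib, ← Finset.sum_smul, ← hcdef]
  have hKclosed : IsClosed K := by
    rw [hKcone]
    exact isClosed_coneInd SN _
  -- both `φ' x v` and `-(φ' x v)` lie in `K`
  have hKmem : ∀ u : Fin n → ℝ, (∀ s : ℝ, 0 ≤ s → s ≤ ε₁ → x + s • u ∈ M ∩ O) →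
      φ' x u ∈ K := by
    intro u hsegu
    have hclosure : φ' x u ∈ closure K := by
      rw [Metric.mem_closure_iff]
      intro ρ hρ
      obtain ⟨t, ht0, htε, hest⟩ := key_approx hMconv hOopen hp hcont hcont' hderiv
        hx hε₁0 hsegu (half_pos hρ)
      refine ⟨t⁻¹ • (φ (x + t • u) - φ x), ⟨t⁻¹, (inv_nonneg).2 ht0.le,
        φ (x + t • u), (hmaps (hsegu t ht0.le htε)).1, rfl⟩, ?_⟩
      rw [dist_eq_norm]
      have h1 : φ' x u - t⁻¹ • (φ (x + t • u) - φ x) =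
          (-t⁻¹) • (φ (x + t • u) - φ x - t • (φ' x u)) := by
        have ht' : (t:ℝ) ≠ 0 := ht0.ne'
        match_scalars <;> field_simp
      rw [h1, norm_smul, Real.norm_eq_abs, abs_neg, abs_of_nonneg ((inv_nonneg).2 ht0.le)]
      calc t⁻¹ * ‖φ (x + t • u) - φ x - t • (φ' x u)‖ ≤ t⁻¹ * (ρ / 2 * t) :=
        mul_le_mul_of_nonneg_left hest ((inv_nonneg).2 ht0.le)
      _ = ρ / 2 := by
          rw [mul_comm (ρ / 2) t, ← mul_assoc, inv_mul_cancel₀ ht0.ne', one_mul]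
      _ < ρ := by linarith
    rwa [hKclosed.closure_eq] at hclosure
  have hw : φ' x v ∈ K := hKmem v hsegU
  have hw' : -(φ' x v) ∈ K := by
    have := hKmem (-v) hsegU'
    rwa [ContinuousLinearMap.map_neg] at this
  -- conclude via the extreme property of the smallest face of `φ x`
  obtain ⟨c, hc0, z, hzN, hzw⟩ := hw
  obtain ⟨c', hc'0, z', hz'N, hz'w⟩ := hw'
  rcases eq_or_lt_of_le hc0 with hc | hc
  · have : φ' x v = 0 := by rw [hzw, ← hc, zero_smul]
    rw [this]
    exact Submodule.zero_mem _
  rcases eq_or_lt_of_le hc'0 with hc' | hc'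
  · have h0 : φ' x v = 0 := by
      have : -(φ' x v) = 0 := by rw [hz'w, ← hc', zero_smul]
      simpa using this
    rw [h0]
    exact Submodule.zero_mem _
  set ε : ℝ := min c⁻¹ c'⁻¹ with hε
  have hε0 : 0 < ε := lt_min (inv_pos.2 hc) (inv_pos.2 hc')
  have h1 : φ x + ε • φ' x v ∈ N := by
    have hεc : ε * c ≤ 1 := by
      calc ε * c ≤ c⁻¹ * c := mul_le_mul_of_nonneg_right (min_le_left _ _) hc0
      _ = 1 := inv_mul_cancel₀ hc.ne'
    have hcombo : φ x + ε • φ' x v = (1 - ε * c) • φ x + (ε * c) • z := by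
      rw [hzw]
      module
    rw [hcombo]
    exact hNconv hyN hzN (by linarith) (mul_nonneg hε0.le hc0) (by ring)
  have h2 : φ x - ε • φ' x v ∈ N := by
    have hεc : ε * c' ≤ 1 := by
      calc ε * c' ≤ c'⁻¹ * c' := mul_le_mul_of_nonneg_right (min_le_right _ _) hc'0
      _ = 1 := inv_mul_cancel₀ hc'.ne'
    have hcombo : φ x - ε • φ' x v = (1 - ε * c') • φ x + (ε * c') • z' := by
      have hneg : ε • φ' x v = -(ε • -(φ' x v)) := by module
      rw [hneg, hz'w]
      module
    rw [hcombo]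
    exact hNconv hyN hz'N (by linarith) (mul_nonneg hε0.le hc'0) (by ring)
  have hext := smallestFace_isExtreme hNconv hyN
  have hseg : φ x ∈ openSegment ℝ (φ x + ε • φ' x v) (φ x - ε • φ' x v) :=
    ⟨1/2, 1/2, by norm_num, by norm_num, by norm_num, by module⟩
  have hface : φ x + ε • φ' x v ∈ smallestFace n N (φ x) :=
    hext.2 h1 h2 mem_smallestFace_self hseg
  have hgen : ε • φ' x v ∈ spanAt n N (φ x) := by
    apply Submodule.subset_span
    refine ⟨φ x + ε • φ' x v, hface, ?_⟩
    simp
  have := Submodule.smul_mem (spanAt n N (φ x)) ε⁻¹ hgen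
  rwa [smul_smul, inv_mul_cancel₀ hε0.ne', one_smul] at this
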